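/- arXiv:1805.10468 — 2 statements merged into one kernel-verified Lean document; each statement's English description precedes it below -/
import Mathlib

section
/- For any r ∈ Spec_ε(A) and any λ ∈ F_p*, the quantity r_{R/R}(λ) for R ⊆ Spec_ε(A)\{0} satisfies (ε|A|)⁴/p · r_{R/R}(λ) ≤ E⁺(f_A, λ·f_A), where λ·f_A denotes the dilate x ↦ f_A(x/λ). -/
open Finset Complex

noncomputable def ft (p : ℕ) [NeZero p] (f : ZMod p → ℂ) (ξ : ZMod p) : ℂ :=
  ∑ x : ZMod p, f x * Complex.exp (-(2 * (Real.pi : ℂ) * Complex.I * (x.val : ℂ) * (ξ.val : ℂ)) / p)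

noncomputable def ind {p : ℕ} (A : Finset (ZMod p)) : ZMod p → ℂ :=
  fun x => if x ∈ A then 1 else 0

noncomputable def bal (p : ℕ) (A : Finset (ZMod p)) : ZMod p → ℂ :=
  fun x => ind A x - (A.card : ℂ) / p

noncomputable def spec (p : ℕ) [NeZero p] (A : Finset (ZMod p)) (ε : ℝ) : Finset (ZMod p) :=
  Finset.univ.filter fun r => ε * A.card ≤ ‖ft p (ind A) r‖

def rDiv {p : ℕ} (R : Finset (ZMod p)) (lam : ZMod p) : ℕ :=
  ((R ×ˢ R).filter fun q => q.1 = lam * q.2).card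

noncomputable def zet (p : ℕ) : ℂ := Complex.exp (-(2 * (Real.pi : ℂ) * Complex.I) / p)

lemma zet_prim (p : ℕ) (hp : p ≠ 0) : IsPrimitiveRoot (zet p) p := by
  have h := (Complex.isPrimitiveRoot_exp p hp).inv
  have : zet p = (Complex.exp (2 * (Real.pi : ℂ) * Complex.I / p))⁻¹ := by
    rw [← Complex.exp_neg, zet, neg_div]
  rwa [this]

lemma zet_pow_p (p : ℕ) (hp : p ≠ 0) : (zet p) ^ p = 1 := (zet_prim p hp).pow_eq_one

lemma zet_pow_mod (p : ℕ) (hp : p ≠ 0) (a : ℕ) : (zet p) ^ a = (zet p) ^ (a % p) := by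
  conv_lhs => rw [← Nat.div_add_mod a p]
  rw [pow_add, pow_mul, zet_pow_p p hp, one_pow, one_mul]

lemma zet_pow_congr (p : ℕ) (hp : p ≠ 0) {a b : ℕ} (h : (a : ZMod p) = (b : ZMod p)) :
    (zet p) ^ a = (zet p) ^ b := by
  rw [zet_pow_mod p hp a, zet_pow_mod p hp b,
    (ZMod.natCast_eq_natCast_iff' a b p).mp h]

lemma exp_eq_zet (p : ℕ) (hp : p ≠ 0) (a b : ℕ) :
    Complex.exp (-(2 * (Real.pi : ℂ) * Complex.I * (a : ℂ) * (b : ℂ)) / p)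
      = (zet p) ^ (a * b) := by
  rw [zet, ← Complex.exp_nat_mul]
  congr 1
  push_cast
  ring

lemma ft_eq_zet (p : ℕ) [NeZero p] (f : ZMod p → ℂ) (ξ : ZMod p) :
    ft p f ξ = ∑ x : ZMod p, f x * (zet p) ^ (x.val * ξ.val) := by
  unfold ft
  exact Finset.sum_congr rfl fun x _ => by
    rw [exp_eq_zet p (NeZero.ne p) x.val ξ.val]

lemma sum_zet (p : ℕ) [NeZero p] (r : ZMod p) (hr : r ≠ 0) :
    ∑ x : ZMod p, (zet p) ^ (x.val * r.val) = 0 := by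
  have hp : p ≠ 0 := NeZero.ne p
  have h1 : ∑ x : ZMod p, (zet p) ^ (x.val * r.val)
      = ∑ i ∈ Finset.range p, ((zet p) ^ r.val) ^ i := by
    refine Finset.sum_nbij' (fun x => x.val) (fun i => (i : ZMod p)) ?_ ?_ ?_ ?_ ?_
    · intro x _; exact Finset.mem_range.mpr (ZMod.val_lt x)
    · intro i _; exact Finset.mem_univ _
    · intro x _; exact ZMod.natCast_zmod_val x
    · intro i hi; exact ZMod.val_cast_of_lt (Finset.mem_range.mp hi)
    · intro x _; rw [← pow_mul, mul_comm]
  rw [h1]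
  have hz1 : (zet p) ^ r.val ≠ 1 := by
    intro h
    have := ((zet_prim p hp).pow_eq_one_iff_dvd r.val).mp h
    have hlt := ZMod.val_lt r
    have hne : r.val ≠ 0 := fun h0 => hr (by
      have := ZMod.natCast_zmod_val r
      rw [h0] at this; simpa using this.symm)
    exact hne (Nat.eq_zero_of_dvd_of_lt this hlt)
  have hzp : ((zet p) ^ r.val) ^ p = 1 := by
    rw [← pow_mul, mul_comm, pow_mul, zet_pow_p p hp, one_pow]
  rw [geom_sum_eq hz1, hzp]
  simp

lemma ft_bal (p : ℕ) [NeZero p] (A : Finset (ZMod p)) (r : ZMod p) (hr : r ≠ 0) :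
    ft p (bal p A) r = ft p (ind A) r := by
  rw [ft_eq_zet, ft_eq_zet]
  unfold bal
  rw [← sub_eq_zero]
  rw [← Finset.sum_sub_distrib]
  have : ∀ x : ZMod p, (ind A x - (A.card : ℂ) / p) * (zet p) ^ (x.val * r.val)
      - ind A x * (zet p) ^ (x.val * r.val)
      = -((A.card : ℂ) / p) * (zet p) ^ (x.val * r.val) := by intro x; ring
  rw [Finset.sum_congr rfl fun x _ => this x, ← Finset.mul_sum, sum_zet p r hr, mul_zero]

lemma ft_dilate (p : ℕ) [Fact p.Prime] (f : ZMod p → ℂ) (lam ξ : ZMod p) (hlam : lam ≠ 0) :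
    ft p (fun x => f (x / lam)) ξ = ft p f (lam * ξ) := by
  have hp : p ≠ 0 := NeZero.ne p
  rw [ft_eq_zet, ft_eq_zet]
  refine (Fintype.sum_equiv (Equiv.mulLeft₀ lam hlam) _ _ fun u => ?_).symm
  simp only [Equiv.mulLeft₀_apply]
  rw [mul_div_cancel_left₀ _ hlam]
  congr 1
  refine zet_pow_congr p hp ?_
  push_cast [ZMod.natCast_val, ZMod.cast_id]
  ring

lemma rDiv_eq_card (p : ℕ) (R : Finset (ZMod p)) (lam : ZMod p) :
    rDiv R lam = (R.filter fun y => lam * y ∈ R).card := by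
  unfold rDiv
  refine Finset.card_bij (fun q _ => q.2) ?_ ?_ ?_
  · rintro ⟨x, y⟩ hq
    simp only [Finset.mem_filter, Finset.mem_product] at hq ⊢
    exact ⟨hq.1.2, hq.2 ▸ hq.1.1⟩
  · rintro ⟨x, y⟩ hq ⟨x', y'⟩ hq' h
    simp only [Finset.mem_filter, Finset.mem_product] at hq hq'
    simp only at h
    simp [Prod.ext_iff, h, hq.2, hq'.2]
  · intro y hy
    simp only [Finset.mem_filter] at hy
    exact ⟨(lam * y, y), by simp [Finset.mem_filter, hy.1, hy.2], rfl⟩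

theorem stmt9 (p : ℕ) [Fact p.Prime] (A : Finset (ZMod p))
    (ε : ℝ) (hε : ε ∈ Set.Ioc (0 : ℝ) 1)
    (R : Finset (ZMod p)) (hR : R ⊆ (spec p A ε).erase 0)
    (lam : ZMod p) (hlam : lam ≠ 0) :
    (ε * A.card) ^ 4 / p * (rDiv R lam : ℝ)
      ≤ (1 / (p : ℝ)) * ∑ ξ : ZMod p,
          ‖ft p (bal p A) ξ‖ ^ 2
            * ‖ft p (fun x => bal p A (x / lam)) ξ‖ ^ 2 := by
  have hp : (0 : ℝ) < p := by
    have := (Fact.out : p.Prime).pos; exact_mod_cast this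
  -- key bound for elements of R
  have hkey : ∀ r ∈ R, ε * A.card ≤ ‖ft p (bal p A) r‖ := by
    intro r hr
    have h := hR hr
    have hr0 : r ≠ 0 := (Finset.mem_erase.mp h).1
    have hspec := (Finset.mem_erase.mp h).2
    rw [spec, Finset.mem_filter] at hspec
    rw [ft_bal p A r hr0]
    exact hspec.2
  have hεA : (0 : ℝ) ≤ ε * A.card := mul_nonneg hε.1.le (Nat.cast_nonneg _)
  set S := R.filter fun y => lam * y ∈ R with hS
  have hcard : (rDiv R lam : ℝ) = (S.card : ℝ) := by
    rw [rDiv_eq_card]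
  rw [div_mul_eq_mul_div, div_eq_mul_inv, mul_comm _ ((p:ℝ)⁻¹), one_div, hcard]
  refine mul_le_mul_of_nonneg_left ?_ (inv_nonneg.mpr hp.le)
  -- main estimate
  calc (ε * A.card) ^ 4 * (S.card : ℝ)
      = ∑ _ξ ∈ S, (ε * A.card) ^ 4 := by rw [Finset.sum_const, nsmul_eq_mul]; ring
    _ ≤ ∑ ξ ∈ S, ‖ft p (bal p A) ξ‖ ^ 2
          * ‖ft p (fun x => bal p A (x / lam)) ξ‖ ^ 2 := by
        refine Finset.sum_le_sum fun ξ hξ => ?_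
        rw [hS, Finset.mem_filter] at hξ
        have h1 : ε * A.card ≤ ‖ft p (bal p A) ξ‖ := hkey ξ hξ.1
        have h2 : ε * A.card ≤ ‖ft p (fun x => bal p A (x / lam)) ξ‖ := by
          rw [ft_dilate p (bal p A) lam ξ hlam]
          exact hkey _ hξ.2
        calc (ε * A.card) ^ 4 = (ε * A.card) ^ 2 * (ε * A.card) ^ 2 := by ring
          _ ≤ ‖ft p (bal p A) ξ‖ ^ 2
              * ‖ft p (fun x => bal p A (x / lam)) ξ‖ ^ 2 := by
            gcongr <;> assumption
    _ ≤ ∑ ξ : ZMod p, ‖ft p (bal p A) ξ‖ ^ 2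
          * ‖ft p (fun x => bal p A (x / lam)) ξ‖ ^ 2 := by
        refine Finset.sum_le_sum_of_subset_of_nonneg (Finset.subset_univ S)
          fun ξ _ _ => by positivity
end

section
/- For R ⊆ Spec_ε(A)\{0}, the multiplicative energy satisfies (ε|A|)⁴/p · Eˣ(R) ≤ Σ_{x∈F_p} r²_{(f_A−f_A)·R}(x), where r_{(f_A−f_A)·R}(x) = Σ_{λ∈R} Σ_{a₁−a₂ = x/λ} f_A(a₁)f_A(a₂) with weights and Eˣ(R) = #{(x,y,z,w) ∈ R⁴ : xy = zw}. -/
open Finset Complex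

noncomputable def balR (p : ℕ) (A : Finset (ZMod p)) : ZMod p → ℝ :=
  fun x => (if x ∈ A then (1 : ℝ) else 0) - (A.card : ℝ) / p

set_option linter.unusedSectionVars false
open ComplexConjugate

namespace Stmt15

noncomputable def zet (p : ℕ) : ℂ := Complex.exp (2 * (Real.pi : ℂ) * Complex.I / p)

variable (p : ℕ) [Fact p.Prime]

lemma pne : p ≠ 0 := (Fact.out : p.Prime).ne_zero

lemma zet_pow_p : zet p ^ p = 1 :=
  (Complex.isPrimitiveRoot_exp p (pne p)).pow_eq_one

lemma zet_pow_mod (n : ℕ) : zet p ^ (n % p) = zet p ^ n := by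
  conv_rhs => rw [← Nat.mod_add_div n p]
  rw [pow_add, pow_mul, zet_pow_p, one_pow, mul_one]

noncomputable def E (t : ZMod p) : ℂ := zet p ^ t.val

lemma E_zero : E p 0 = 1 := by
  simp [E, ZMod.val_zero]

lemma E_add (s t : ZMod p) : E p (s + t) = E p s * E p t := by
  rw [E, E, E, ZMod.val_add, zet_pow_mod, pow_add]

lemma E_mul_val (s t : ZMod p) : E p (s * t) = zet p ^ (s.val * t.val) := by
  rw [E, ZMod.val_mul, zet_pow_mod]

lemma E_neg (t : ZMod p) : E p (-t) = (E p t)⁻¹ := by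
  refine eq_inv_of_mul_eq_one_left ?_
  rw [← E_add, neg_add_cancel, E_zero]

lemma norm_E (t : ZMod p) : ‖E p t‖ = 1 := by
  have h : (2 * (Real.pi : ℂ) * Complex.I / p) = ((2 * Real.pi / p : ℝ) : ℂ) * Complex.I := by
    push_cast; ring
  rw [E, norm_pow, zet, h, Complex.norm_exp_ofReal_mul_I, one_pow]

lemma conj_E (t : ZMod p) : conj (E p t) = E p (-t) := by
  rw [E_neg, ← Complex.inv_eq_conj (norm_E p t)]

lemma sum_E_univ : ∑ x : ZMod p, E p x = 0 := by
  have h1 : (1:ℕ) < p := (Fact.out : p.Prime).one_lt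
  have := (Complex.isPrimitiveRoot_exp p (pne p)).geom_sum_eq_zero h1
  rw [← this]
  refine Finset.sum_bij' (fun (x : ZMod p) _ => x.val) (fun k _ => (k : ZMod p)) ?_ ?_ ?_ ?_ ?_
  · intro a _; exact Finset.mem_range.2 (ZMod.val_lt a)
  · intro k _; exact Finset.mem_univ _
  · intro a _; exact ZMod.natCast_rightInverse a
  · intro k hk; exact ZMod.val_cast_of_lt (Finset.mem_range.1 hk)
  · intro a _; rfl

lemma sum_E (c : ZMod p) : ∑ x : ZMod p, E p (c * x) = if c = 0 then (p : ℂ) else 0 := by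
  split_ifs with hc
  · subst hc
    simp [E_zero, Finset.card_univ, ZMod.card]
  · rw [← sum_E_univ p]
    exact Fintype.sum_bijective (fun x => c * x) (Equiv.mulLeft₀ c hc).bijective _ _ (fun x => rfl)

/-- The key exponential rewrite. -/
lemma exp_eq_conj_E (x η : ZMod p) :
    Complex.exp (-(2 * (Real.pi : ℂ) * Complex.I * (x.val : ℂ) * (η.val : ℂ)) / p)
      = conj (E p (x * η)) := by
  rw [conj_E, E_neg, E_mul_val]
  rw [zet, ← Complex.exp_nat_mul, ← Complex.exp_neg]
  congr 1
  push_cast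
  ring

noncomputable def F (A : Finset (ZMod p)) : ZMod p → ℂ := fun x => ((balR p A x : ℝ) : ℂ)

noncomputable def fhat (A : Finset (ZMod p)) (η : ZMod p) : ℂ :=
  ∑ x : ZMod p, F p A x * conj (E p (x * η))

lemma fhat_eq_ft (A : Finset (ZMod p)) (η : ZMod p) (hη : η ≠ 0) :
    fhat p A η = ft p (ind A) η := by
  have hsum : ∑ x : ZMod p, conj (E p (x * η)) = 0 := by
    rw [← map_sum]
    have : ∑ x : ZMod p, E p (x * η) = 0 := by
      have := sum_E p η
      rw [if_neg hη] at this
      rw [← this]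
      exact Finset.sum_congr rfl fun x _ => by rw [mul_comm]
    rw [this, map_zero]
  have hterm : ∀ x : ZMod p, F p A x * conj (E p (x * η))
      = ind A x * conj (E p (x * η)) - ((A.card : ℂ)/p) * conj (E p (x * η)) := by
    intro x
    rw [F, balR, ind]
    push_cast
    ring_nf
    rw [apply_ite (fun r : ℝ => (r : ℂ))]
    push_cast
    ring_nf
  rw [fhat, ft]
  calc ∑ x : ZMod p, F p A x * conj (E p (x * η))
      = ∑ x : ZMod p, (ind A x * conj (E p (x * η)) - ((A.card : ℂ)/p) * conj (E p (x * η))) :=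
        Finset.sum_congr rfl fun x _ => hterm x
    _ = ∑ x : ZMod p, ind A x * conj (E p (x * η)) - ((A.card : ℂ)/p) * ∑ x : ZMod p, conj (E p (x * η)) := by
        rw [Finset.sum_sub_distrib, Finset.mul_sum]
    _ = ∑ x : ZMod p, ind A x * conj (E p (x * η)) := by rw [hsum, mul_zero, sub_zero]
    _ = ∑ x : ZMod p, ind A x * Complex.exp (-(2 * (Real.pi : ℂ) * Complex.I * (x.val : ℂ) * (η.val : ℂ)) / p) :=
        Finset.sum_congr rfl fun x _ => by rw [exp_eq_conj_E]

lemma spec_bound (A : Finset (ZMod p)) (ε : ℝ) (η : ZMod p)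
    (hη : η ∈ (spec p A ε).erase 0) : ε * A.card ≤ ‖fhat p A η‖ := by
  obtain ⟨hne, hs⟩ := Finset.mem_erase.1 hη
  rw [fhat_eq_ft p A η hne]
  exact (Finset.mem_filter.1 hs).2



lemma gc (A : Finset (ZMod p)) (η : ZMod p) :
    fhat p A η * conj (fhat p A η)
      = ∑ v : ZMod p × ZMod p, F p A v.1 * F p A v.2 * E p ((v.2 - v.1) * η) := by
  have hconj : conj (fhat p A η) = ∑ a : ZMod p, F p A a * E p (a * η) := by
    rw [fhat, map_sum]
    refine Finset.sum_congr rfl fun a _ => ?_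
    rw [map_mul, Complex.conj_conj, F, Complex.conj_ofReal]
  rw [hconj, fhat, Finset.sum_mul_sum, Fintype.sum_prod_type]
  refine Finset.sum_congr rfl fun s _ => Finset.sum_congr rfl fun a _ => ?_
  rw [conj_E, show (a - s) * η = -(s * η) + a * η by ring, E_add]
  ring

lemma key (A : Finset (ZMod p)) (l m : ZMod p) (hl : l ≠ 0) (hm : m ≠ 0) :
    (p : ℂ) * ∑ x : ZMod p, (∑ a : ZMod p, F p A (x / l + a) * F p A a)
        * (∑ b : ZMod p, F p A (x / m + b) * F p A b)
      = ∑ ξ : ZMod p, (fhat p A (l * ξ) * conj (fhat p A (l * ξ)))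
          * (fhat p A (m * ξ) * conj (fhat p A (m * ξ))) := by
  -- abbreviation
  set f := F p A with hf
  -- RHS reduction
  have h3 : ∀ v w : ZMod p × ZMod p,
      (∑ ξ : ZMod p, (f v.1 * f v.2 * E p ((v.2 - v.1) * (l * ξ)))
        * (f w.1 * f w.2 * E p ((w.2 - w.1) * (m * ξ))))
      = f v.1 * f v.2 * f w.1 * f w.2
          * (if (v.2 - v.1) * l + (w.2 - w.1) * m = 0 then (p : ℂ) else 0) := by
    intro v w
    rw [← sum_E p ((v.2 - v.1) * l + (w.2 - w.1) * m), Finset.mul_sum]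
    refine Finset.sum_congr rfl fun ξ _ => ?_
    rw [show ((v.2 - v.1) * l + (w.2 - w.1) * m) * ξ
        = (v.2 - v.1) * (l * ξ) + (w.2 - w.1) * (m * ξ) by ring, E_add]
    ring
  have hcond : ∀ s a u b : ZMod p,
      ((a - s) * l + (b - u) * m = 0) ↔ (u = b + (a - s) * l / m) := by
    intro s a u b
    constructor
    · intro h
      field_simp
      linear_combination -h
    · intro h
      subst h
      field_simp
      ring
  have hRHS : (∑ ξ : ZMod p, (fhat p A (l * ξ) * conj (fhat p A (l * ξ)))
          * (fhat p A (m * ξ) * conj (fhat p A (m * ξ))))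
      = ∑ s : ZMod p, ∑ a : ZMod p, ∑ b : ZMod p,
          f s * f a * f (b + (a - s) * l / m) * f b * (p : ℂ) := by
    calc (∑ ξ : ZMod p, (fhat p A (l * ξ) * conj (fhat p A (l * ξ)))
          * (fhat p A (m * ξ) * conj (fhat p A (m * ξ))))
        = ∑ ξ : ZMod p, ∑ v : ZMod p × ZMod p, ∑ w : ZMod p × ZMod p,
            (f v.1 * f v.2 * E p ((v.2 - v.1) * (l * ξ)))
              * (f w.1 * f w.2 * E p ((w.2 - w.1) * (m * ξ))) := by
          refine Finset.sum_congr rfl fun ξ _ => ?_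
          rw [gc, gc, Finset.sum_mul_sum]
      _ = ∑ v : ZMod p × ZMod p, ∑ w : ZMod p × ZMod p, ∑ ξ : ZMod p,
            (f v.1 * f v.2 * E p ((v.2 - v.1) * (l * ξ)))
              * (f w.1 * f w.2 * E p ((w.2 - w.1) * (m * ξ))) := by
          rw [Finset.sum_comm]
          exact Finset.sum_congr rfl fun v _ => Finset.sum_comm
      _ = ∑ v : ZMod p × ZMod p, ∑ w : ZMod p × ZMod p,
            f v.1 * f v.2 * f w.1 * f w.2
              * (if (v.2 - v.1) * l + (w.2 - w.1) * m = 0 then (p : ℂ) else 0) := by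
          exact Finset.sum_congr rfl fun v _ => Finset.sum_congr rfl fun w _ => h3 v w
      _ = ∑ s : ZMod p, ∑ a : ZMod p, ∑ u : ZMod p, ∑ b : ZMod p,
            f s * f a * f u * f b
              * (if (a - s) * l + (b - u) * m = 0 then (p : ℂ) else 0) := by
          simp only [Fintype.sum_prod_type]
      _ = ∑ s : ZMod p, ∑ a : ZMod p, ∑ b : ZMod p, ∑ u : ZMod p,
            (if u = b + (a - s) * l / m then f s * f a * f u * f b * (p : ℂ) else 0) := by
          refine Finset.sum_congr rfl fun s _ => Finset.sum_congr rfl fun a _ => ?_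
          rw [Finset.sum_comm]
          refine Finset.sum_congr rfl fun b _ => Finset.sum_congr rfl fun u _ => ?_
          simp only [hcond]
          split_ifs <;> simp
      _ = ∑ s : ZMod p, ∑ a : ZMod p, ∑ b : ZMod p,
            f s * f a * f (b + (a - s) * l / m) * f b * (p : ℂ) := by
          refine Finset.sum_congr rfl fun s _ => Finset.sum_congr rfl fun a _ =>
            Finset.sum_congr rfl fun b _ => ?_
          rw [Finset.sum_ite_eq' Finset.univ]
          simp
  rw [hRHS]
  -- LHS reduction
  have hL : ∀ a : ZMod p,
      (∑ x : ZMod p, ∑ b : ZMod p, (f (x / l + a) * f a) * (f (x / m + b) * f b))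
        = ∑ s : ZMod p, ∑ b : ZMod p, (f s * f a) * (f ((s - a) * l / m + b) * f b) := by
    intro a
    refine (Fintype.sum_bijective (fun s : ZMod p => (s - a) * l)
      (((Equiv.subRight a).trans (Equiv.mulRight₀ l hl)).bijective) _ _ ?_).symm
    intro s
    refine Finset.sum_congr rfl fun b _ => ?_
    rw [show (s - a) * l / l + a = s by rw [mul_div_cancel_right₀ _ hl]; ring]
  calc (p : ℂ) * ∑ x : ZMod p, (∑ a : ZMod p, f (x / l + a) * f a)
        * (∑ b : ZMod p, f (x / m + b) * f b)
      = (p : ℂ) * ∑ x : ZMod p, ∑ a : ZMod p, ∑ b : ZMod p,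
          (f (x / l + a) * f a) * (f (x / m + b) * f b) := by
        congr 1
        refine Finset.sum_congr rfl fun x _ => ?_
        rw [Finset.sum_mul_sum]
    _ = (p : ℂ) * ∑ a : ZMod p, ∑ x : ZMod p, ∑ b : ZMod p,
          (f (x / l + a) * f a) * (f (x / m + b) * f b) := by
        rw [Finset.sum_comm]
    _ = (p : ℂ) * ∑ a : ZMod p, ∑ s : ZMod p, ∑ b : ZMod p,
          (f s * f a) * (f ((s - a) * l / m + b) * f b) := by
        congr 1
        exact Finset.sum_congr rfl fun a _ => hL a
    _ = ∑ a : ZMod p, ∑ s : ZMod p, ∑ b : ZMod p,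
          f a * f s * f (b + (s - a) * l / m) * f b * (p : ℂ) := by
        rw [Finset.mul_sum]
        refine Finset.sum_congr rfl fun a _ => ?_
        rw [Finset.mul_sum]
        refine Finset.sum_congr rfl fun s _ => ?_
        rw [Finset.mul_sum]
        refine Finset.sum_congr rfl fun b _ => ?_
        rw [show (s - a) * l / m + b = b + (s - a) * l / m by ring]
        ring
    _ = ∑ s : ZMod p, ∑ a : ZMod p, ∑ b : ZMod p,
          f s * f a * f (b + (a - s) * l / m) * f b * (p : ℂ) := rfl



lemma keyR (A : Finset (ZMod p)) (l m : ZMod p) (hl : l ≠ 0) (hm : m ≠ 0) :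
    (p : ℝ) * ∑ x : ZMod p, (∑ a : ZMod p, balR p A (x / l + a) * balR p A a)
        * (∑ b : ZMod p, balR p A (x / m + b) * balR p A b)
      = ∑ ξ : ZMod p, Complex.normSq (fhat p A (l * ξ)) * Complex.normSq (fhat p A (m * ξ)) := by
  have h := key p A l m hl hm
  simp only [F] at h
  apply Complex.ofReal_injective
  push_cast
  simp only [← Complex.mul_conj]
  exact h

lemma count (R : Finset (ZMod p)) (hR0 : ∀ r ∈ R, r ≠ 0) :
    ∑ l ∈ R, ∑ m ∈ R,
        (Finset.univ.filter fun ξ : ZMod p => l * ξ ∈ R ∧ m * ξ ∈ R).card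
      = (((R ×ˢ R) ×ˢ (R ×ˢ R)).filter fun q => q.1.1 * q.1.2 = q.2.1 * q.2.2).card := by
  have h1 : ∑ l ∈ R, ∑ m ∈ R,
        (Finset.univ.filter fun ξ : ZMod p => l * ξ ∈ R ∧ m * ξ ∈ R).card
      = (((R ×ˢ R) ×ˢ (Finset.univ : Finset (ZMod p))).filter
          fun t => t.1.1 * t.2 ∈ R ∧ t.1.2 * t.2 ∈ R).card := by
    rw [Finset.card_filter, Finset.sum_product, Finset.sum_product]
    refine Finset.sum_congr rfl fun l _ => Finset.sum_congr rfl fun m _ => ?_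
    rw [Finset.card_filter]
  rw [h1]
  refine Finset.card_bij'
    (fun t _ => ((t.1.1 * t.2, t.1.2), (t.1.2 * t.2, t.1.1)))
    (fun q _ => ((q.2.2, q.1.2), q.1.1 / q.2.2)) ?_ ?_ ?_ ?_
  · rintro ⟨⟨l, m⟩, ξ⟩ ht
    simp only [Finset.mem_filter, Finset.mem_product] at ht
    obtain ⟨⟨⟨hl, hm⟩, -⟩, hlξ, hmξ⟩ := ht
    refine Finset.mem_filter.2 ⟨Finset.mem_product.2 ⟨Finset.mem_product.2 ⟨hlξ, hm⟩,
      Finset.mem_product.2 ⟨hmξ, hl⟩⟩, by ring⟩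
  · rintro ⟨⟨x, y⟩, ⟨z, w⟩⟩ hq
    simp only [Finset.mem_filter, Finset.mem_product] at hq
    obtain ⟨⟨⟨hx, hy⟩, hz, hw⟩, hxy⟩ := hq
    have hw0 : w ≠ 0 := hR0 w hw
    have e1 : w * (x / w) = x := by field_simp
    have e2 : y * (x / w) = z := by
      field_simp
      linear_combination hxy
    refine Finset.mem_filter.2 ⟨Finset.mem_product.2 ⟨Finset.mem_product.2 ⟨hw, hy⟩,
      Finset.mem_univ _⟩, by rw [e1]; exact hx, by rw [e2]; exact hz⟩
  · rintro ⟨⟨l, m⟩, ξ⟩ ht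
    simp only [Finset.mem_filter, Finset.mem_product] at ht
    obtain ⟨⟨⟨hl, hm⟩, -⟩, -, -⟩ := ht
    have hl0 : l ≠ 0 := hR0 l hl
    have h2 : l * ξ / l = ξ := by field_simp
    dsimp only
    rw [h2]
  · rintro ⟨⟨x, y⟩, ⟨z, w⟩⟩ hq
    simp only [Finset.mem_filter, Finset.mem_product] at hq
    obtain ⟨⟨⟨hx, hy⟩, hz, hw⟩, hxy⟩ := hq
    have hw0 : w ≠ 0 := hR0 w hw
    have e1 : w * (x / w) = x := by field_simp
    have e2 : y * (x / w) = z := by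
      field_simp
      linear_combination hxy
    dsimp only
    rw [e1, e2]


end Stmt15

theorem stmt15 (p : ℕ) [Fact p.Prime] (A : Finset (ZMod p))
    (ε : ℝ) (hε : ε ∈ Set.Ioc (0 : ℝ) 1)
    (R : Finset (ZMod p)) (hR : R ⊆ (spec p A ε).erase 0) :
    (ε * A.card) ^ 4 / p *
        (((((R ×ˢ R) ×ˢ (R ×ˢ R)).filter
            fun q => q.1.1 * q.1.2 = q.2.1 * q.2.2).card : ℝ))
      ≤ ∑ x : ZMod p,
          (∑ lam ∈ R, ∑ a : ZMod p, balR p A (x / lam + a) * balR p A a) ^ 2 := by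
  have hp : (0 : ℝ) < p := by exact_mod_cast (Fact.out : p.Prime).pos
  have hR0 : ∀ r ∈ R, r ≠ 0 := fun r hr => (Finset.mem_erase.1 (hR hr)).1
  have hRs : ∀ r ∈ R, ε * A.card ≤ ‖Stmt15.fhat p A r‖ :=
    fun r hr => Stmt15.spec_bound p A ε r (hR hr)
  have hεA : (0 : ℝ) ≤ ε * A.card := mul_nonneg hε.1.le (Nat.cast_nonneg _)
  have hexp : ∑ x : ZMod p,
        (∑ lam ∈ R, ∑ a : ZMod p, balR p A (x / lam + a) * balR p A a) ^ 2
      = ∑ l ∈ R, ∑ m ∈ R, ∑ x : ZMod p,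
          (∑ a : ZMod p, balR p A (x / l + a) * balR p A a) *
          (∑ b : ZMod p, balR p A (x / m + b) * balR p A b) :=
    calc ∑ x : ZMod p,
        (∑ lam ∈ R, ∑ a : ZMod p, balR p A (x / lam + a) * balR p A a) ^ 2
        = ∑ x : ZMod p, ∑ l ∈ R, ∑ m ∈ R,
            (∑ a : ZMod p, balR p A (x / l + a) * balR p A a) *
            (∑ b : ZMod p, balR p A (x / m + b) * balR p A b) :=
          Finset.sum_congr rfl fun x _ => by rw [sq, Finset.sum_mul_sum]
      _ = ∑ l ∈ R, ∑ x : ZMod p, ∑ m ∈ R,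
            (∑ a : ZMod p, balR p A (x / l + a) * balR p A a) *
            (∑ b : ZMod p, balR p A (x / m + b) * balR p A b) := Finset.sum_comm
      _ = ∑ l ∈ R, ∑ m ∈ R, ∑ x : ZMod p,
            (∑ a : ZMod p, balR p A (x / l + a) * balR p A a) *
            (∑ b : ZMod p, balR p A (x / m + b) * balR p A b) :=
          Finset.sum_congr rfl fun l _ => Finset.sum_comm
  rw [hexp, ← Stmt15.count p R hR0]
  push_cast
  rw [Finset.mul_sum]
  refine Finset.sum_le_sum fun l hl => ?_
  rw [Finset.mul_sum]
  refine Finset.sum_le_sum fun m hm => ?_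
  have hkey := Stmt15.keyR p A l m (hR0 l hl) (hR0 m hm)
  have hS : (∑ x : ZMod p, (∑ a : ZMod p, balR p A (x / l + a) * balR p A a) *
        (∑ b : ZMod p, balR p A (x / m + b) * balR p A b))
      = (∑ ξ : ZMod p, Complex.normSq (Stmt15.fhat p A (l * ξ))
          * Complex.normSq (Stmt15.fhat p A (m * ξ))) / p := by
    rw [eq_div_iff hp.ne', mul_comm]
    exact hkey
  rw [hS, div_mul_eq_mul_div]
  gcongr
  calc (ε * (A.card : ℝ)) ^ 4 * ((Finset.univ.filter
          fun ξ : ZMod p => l * ξ ∈ R ∧ m * ξ ∈ R).card : ℝ)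
      = ∑ _ξ ∈ (Finset.univ.filter fun ξ : ZMod p => l * ξ ∈ R ∧ m * ξ ∈ R),
          (ε * (A.card : ℝ)) ^ 4 := by
        rw [Finset.sum_const, nsmul_eq_mul]; ring
    _ ≤ ∑ ξ ∈ (Finset.univ.filter fun ξ : ZMod p => l * ξ ∈ R ∧ m * ξ ∈ R),
          Complex.normSq (Stmt15.fhat p A (l * ξ)) * Complex.normSq (Stmt15.fhat p A (m * ξ)) := by
        refine Finset.sum_le_sum fun ξ hξ => ?_
        obtain ⟨-, h1, h2⟩ := Finset.mem_filter.1 hξ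
        have b1 : (ε * (A.card : ℝ)) ^ 2 ≤ Complex.normSq (Stmt15.fhat p A (l * ξ)) := by
          rw [← Complex.sq_norm]
          exact pow_le_pow_left₀ hεA (hRs _ h1) 2
        have b2 : (ε * (A.card : ℝ)) ^ 2 ≤ Complex.normSq (Stmt15.fhat p A (m * ξ)) := by
          rw [← Complex.sq_norm]
          exact pow_le_pow_left₀ hεA (hRs _ h2) 2
        calc (ε * (A.card : ℝ)) ^ 4 = (ε * (A.card : ℝ)) ^ 2 * (ε * (A.card : ℝ)) ^ 2 := by ring
          _ ≤ _ := mul_le_mul b1 b2 (sq_nonneg _) (Complex.normSq_nonneg _)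
    _ ≤ ∑ ξ : ZMod p,
          Complex.normSq (Stmt15.fhat p A (l * ξ)) * Complex.normSq (Stmt15.fhat p A (m * ξ)) :=
        Finset.sum_le_sum_of_subset_of_nonneg (Finset.filter_subset _ _)
          (fun ξ _ _ => mul_nonneg (Complex.normSq_nonneg _) (Complex.normSq_nonneg _))
end
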